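/- Let G = (V, E) be a cubic graph and let (X, Y) be the corresponding instance of MLA. Then every symbol of the alphabet occurs at most 5 times in X, and every symbol occurs at most 5 times in Y. -/

import Mathlib

namespace MLA

/-! ### Generic labelings of aligned genomes -/

/-- An operation labeling a substring of the genome `X`: the substring of length
`len` starting at position `start`; `src = none` means a loss, `src = some s`
means a duplication coming from the identical occurrence starting at `s`. -/
structure Op where
  start : ℕ
  len : ℕ
  src : Option ℕ
deriving DecidableEq

/-- Cost of an operation: a duplication costs `1`, a loss of length `z` costs `z`. -/
def Op.cost (o : Op) : ℕ := if o.src = none then o.len else 1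

/-- The positions covered by (the target substring of) an operation. -/
def Op.covers (o : Op) (p : ℕ) : Prop := o.start ≤ p ∧ p < o.start + o.len

instance (o : Op) (p : ℕ) : Decidable (o.covers p) := by
  unfold Op.covers; infer_instance

/-- Validity of an operation with respect to the genome `X`: nonempty target
inside `X`, and a duplication comes from a different occurrence in `X` of a
string identical to its target substring. -/
def Op.valid {α : Type*} (X : List α) (o : Op) : Prop :=
  1 ≤ o.len ∧ o.start + o.len ≤ X.length ∧
    ∀ s, o.src = some s → s ≠ o.start ∧ s + o.len ≤ X.length ∧
      ∀ t < o.len, X[s + t]? = X[o.start + t]?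

/-- A duplication from occurrence `s` to occurrence `t` is maximal if the
characters immediately to the left of `s` and `t` differ (or one does not
exist) and likewise on the right. -/
def Op.maximalDup {α : Type*} (X : List α) (o : Op) : Prop :=
  ∃ s, o.src = some s ∧
    (s = 0 ∨ o.start = 0 ∨ X[s - 1]? ≠ X[o.start - 1]?) ∧
    (X[s + o.len]? = none ∨ X[o.start + o.len]? = none ∨
      X[s + o.len]? ≠ X[o.start + o.len]?)

/-- `L` is a labeling of the set `U` of unmatched positions of the genome `X`:
the target substrings of its operations are valid and partition `U`. -/
structure IsLabeling {α : Type*} (X : List α) (U : ℕ → Prop) (L : Finset Op) :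
    Prop where
  valid : ∀ o ∈ L, o.valid X
  unmatched : ∀ o ∈ L, ∀ p, o.covers p → U p
  covers : ∀ p, U p → ∃ o ∈ L, o.covers p
  disjoint : ∀ o ∈ L, ∀ o' ∈ L, ∀ p, o.covers p → o'.covers p → o = o'

/-- Arc of the duplication graph of a labeling: from the operation owning part
of the source occurrence of a duplication to the duplication itself. -/
def dupArc (L : Finset Op) (o o' : Op) : Prop :=
  o ∈ L ∧ o' ∈ L ∧ ∃ s, o'.src = some s ∧ ∃ p, o.covers p ∧ s ≤ p ∧ p < s + o'.len

/-- A labeling is feasible if its duplication graph has no cycle. -/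
def Feasible (L : Finset Op) : Prop := ∀ o, ¬ Relation.TransGen (dupArc L) o o

/-- Cost of a labeling. -/
def cost (L : Finset Op) : ℕ := ∑ o ∈ L, o.cost

/-- The operations of `L` labeling some position in `[lo, hi)`. -/
def restrict (L : Finset Op) (lo hi : ℕ) : Finset Op :=
  L.filter fun o => ∃ p ∈ Finset.Ico lo hi, o.covers p

/-- The total cost of the operations of `L` labeling positions in `[lo, hi)`. -/
def blockCost (L : Finset Op) (lo hi : ℕ) : ℕ := cost (restrict L lo hi)

/-! ### The reduction from Minimum Vertex Cover on cubic graphs -/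

/-- The alphabet of the reduction (all symbols are pairwise distinct). -/
inductive Sym (n : ℕ) : Type
  | s  (i : Fin n)
  | se (i j : Fin n)
  | x  (i : Fin n) (p : ℕ)
  | e  (i j : Fin n) (t : Fin 2)
  | z  (i : Fin n) (t : Fin 8)
  | w  (i : Fin n) (t : Fin 4)
  | u  (i : Fin n) (t : Fin 6)
deriving DecidableEq

variable {n : ℕ} (G : SimpleGraph (Fin n)) [DecidableRel G.Adj]

/-- The edges of `G` as pairs `(i, j)` with `i < j`, in lexicographic order. -/
def edgePairs : List (Fin n × Fin n) :=
  (List.finRange n).flatMap fun i =>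
    ((List.finRange n).filter fun j => decide (i < j ∧ G.Adj i j)).map fun j => (i, j)

/-- The edges incident to `i`, in edge order. -/
def incEdges (i : Fin n) : List (Fin n × Fin n) :=
  (edgePairs G).filter fun e => decide (e.1 = i ∨ e.2 = i)

/-- The `t`-th (`0`-based) edge incident to `i`. -/
def nthInc (i : Fin n) (t : ℕ) : Fin n × Fin n := (incEdges G i).getD t (i, i)

/-- The `0`-based index of edge `e` among the edges incident to `i`. -/
def edgeIdx (i : Fin n) (e : Fin n × Fin n) : ℕ := (incEdges G i).idxOf e

/-- Left part of the `i`-encoding of edge `e`. -/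
def encL (i : Fin n) (e : Fin n × Fin n) : List (Sym n) :=
  if i = e.1 then [.x i (edgeIdx G i e)] else [.e e.1 e.2 0, .e e.1 e.2 1]

/-- Right part of the `i`-encoding of edge `e`. -/
def encR (i : Fin n) (e : Fin n × Fin n) : List (Sym n) :=
  if i = e.1 then [.e e.1 e.2 0, .e e.1 e.2 1] else [.x i (edgeIdx G i e)]

/-- The `i`-encoding of edge `e`. -/
def enc (i : Fin n) (e : Fin n × Fin n) : List (Sym n) := encL G i e ++ encR G i e

/-- Block `B_{X-VE}(e)`. -/
def edgeBlockX (e : Fin n × Fin n) : List (Sym n) :=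
  [.se e.1 e.2, .x e.1 (edgeIdx G e.1 e), .e e.1 e.2 0, .e e.1 e.2 1,
   .x e.2 (edgeIdx G e.2 e)]

/-- Block `B_{X-VE}(v_i)`. -/
def vertexBlockX (i : Fin n) : List (Sym n) :=
  [.s i, .z i 0, .z i 1] ++ enc G i (nthInc G i 0) ++
  [.z i 2, .z i 3] ++ enc G i (nthInc G i 1) ++
  [.z i 4, .z i 5] ++ enc G i (nthInc G i 2) ++
  [.z i 6, .z i 7]

/-- Block `B_{X,A,1}(v_i) = B_{Y,A,1}(v_i)`. -/
def A1Block (i : Fin n) : List (Sym n) :=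
  [.w i 0, .z i 0, .z i 1, .w i 1, .z i 2, .z i 3,
   .w i 2, .z i 4, .z i 5, .w i 3, .z i 6, .z i 7]

/-- Block `B_{X,A,2}(v_i) = B_{Y,A,2}(v_i)`. -/
def A2Block (i : Fin n) : List (Sym n) :=
  [.u i 0, .z i 1] ++ encL G i (nthInc G i 0) ++ [.u i 1] ++ encR G i (nthInc G i 0) ++
  [.z i 2, .u i 2, .z i 3] ++ encL G i (nthInc G i 1) ++ [.u i 3] ++ encR G i (nthInc G i 1) ++
  [.z i 4, .u i 4, .z i 5] ++ encL G i (nthInc G i 2) ++ [.u i 5] ++ encR G i (nthInc G i 2) ++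
  [.z i 6]

/-- The genome `X` corresponding to the cubic graph `G`. -/
def genomeX : List (Sym n) :=
  ((List.finRange n).flatMap fun i => vertexBlockX G i) ++
  ((edgePairs G).flatMap fun e => edgeBlockX G e) ++
  ((List.finRange n).flatMap fun i => A1Block i ++ A2Block G i)

/-- The aligned genome `Y` (`none` denotes a gap). -/
def alignedY : List (Option (Sym n)) :=
  ((List.finRange n).flatMap fun i => some (.s i) :: List.replicate 17 none) ++
  ((edgePairs G).flatMap fun e => some (.se e.1 e.2) :: List.replicate 4 none) ++
  ((List.finRange n).flatMap fun i => (A1Block i ++ A2Block G i).map some)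

/-- The unmatched positions of `X` (those aligned with a gap of `Y`). -/
def UnmatchedX (p : ℕ) : Prop := (alignedY G)[p]? = some none

/-- Start position of `B_{X-VE}(v_i)` in `X`. -/
def vStart (i : Fin n) : ℕ := 18 * i.val

/-- Start position of `B_{X-VE}(e)` in `X`. -/
def eStart (e : Fin n × Fin n) : ℕ := 18 * n + 5 * (edgePairs G).idxOf e

/-- Start position of `B_{X,A,1}(v_i)` in `X` (`B_{X,A,2}(v_i)` starts 12 later). -/
def aStart (i : Fin n) : ℕ := 18 * n + 5 * (edgePairs G).length + 33 * i.val

/-- Offset of the `i`-encoding inside `B_{X-VE}(e)`. -/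
def encOff (i : Fin n) (e : Fin n × Fin n) : ℕ := if i = e.1 then 1 else 2

/-- The type-a labeling of `B_{X-VE}(v_i)`: four duplications coming from
`B_{X,A,1}(v_i)` (for the pairs of `z`-symbols) and three duplications coming
from the blocks of the three edges incident to `v_i` (for the encodings). -/
def typeA (i : Fin n) : Finset Op :=
  { ⟨vStart i + 1, 2, some (aStart G i + 1)⟩,
    ⟨vStart i + 6, 2, some (aStart G i + 4)⟩,
    ⟨vStart i + 11, 2, some (aStart G i + 7)⟩,
    ⟨vStart i + 16, 2, some (aStart G i + 10)⟩,
    ⟨vStart i + 3, 3, some (eStart G (nthInc G i 0) + encOff i (nthInc G i 0))⟩,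
    ⟨vStart i + 8, 3, some (eStart G (nthInc G i 1) + encOff i (nthInc G i 1))⟩,
    ⟨vStart i + 13, 3, some (eStart G (nthInc G i 2) + encOff i (nthInc G i 2))⟩ }

/-- The type-b labeling of `B_{X-VE}(v_i)`: six duplications coming from
`B_{X,A,2}(v_i)` and two losses of length one (for `z_{i,1}` and `z_{i,8}`). -/
def typeB (i : Fin n) : Finset Op :=
  let a := aStart G i + 12
  let l1 := (encL G i (nthInc G i 0)).length
  let l2 := (encL G i (nthInc G i 1)).length
  let l3 := (encL G i (nthInc G i 2)).length
  { ⟨vStart i + 1, 1, none⟩,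
    ⟨vStart i + 17, 1, none⟩,
    ⟨vStart i + 2, 1 + l1, some (a + 1)⟩,
    ⟨vStart i + 3 + l1, 4 - l1, some (a + 3 + l1)⟩,
    ⟨vStart i + 7, 1 + l2, some (a + 8)⟩,
    ⟨vStart i + 8 + l2, 4 - l2, some (a + 10 + l2)⟩,
    ⟨vStart i + 12, 1 + l3, some (a + 15)⟩,
    ⟨vStart i + 13 + l3, 4 - l3, some (a + 17 + l3)⟩ }

/-- The cost-2 labeling of `B_{X-VE}(e)` using a duplication coming from
`B_{X-VE}(v_i)` (where `i = e.1`) and a loss for the last character. -/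
def edgeLabA (e : Fin n × Fin n) : Finset Op :=
  { ⟨eStart G e + 1, 3, some (vStart e.1 + 3 + 5 * edgeIdx G e.1 e)⟩,
    ⟨eStart G e + 4, 1, none⟩ }

/-- The cost-2 labeling of `B_{X-VE}(e)` using a duplication coming from
`B_{X-VE}(v_j)` (where `j = e.2`) and a loss for the second character. -/
def edgeLabB (e : Fin n × Fin n) : Finset Op :=
  { ⟨eStart G e + 2, 3, some (vStart e.2 + 3 + 5 * edgeIdx G e.2 e)⟩,
    ⟨eStart G e + 1, 1, none⟩ }

/-- `C` is a vertex cover of `G`. -/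
def IsVC (C : Finset (Fin n)) : Prop := ∀ ⦃u v : Fin n⦄, G.Adj u v → u ∈ C ∨ v ∈ C

end MLA

namespace MLAProof
open MLA List

section generic

lemma count_flatMap_le {α β : Type*} [BEq α] (a : α) (g : β → ℕ) (l : List β) (f : β → List α)
    (h : ∀ b ∈ l, (f b).count a ≤ g b) :
    (l.flatMap f).count a ≤ (l.map g).sum := by
  induction l with
  | nil => simp
  | cons b l ih =>
    simp only [flatMap_cons, count_append, map_cons, sum_cons]
    exact Nat.add_le_add (h b (mem_cons_self ..))
      (ih fun b hb => h b (mem_cons_of_mem _ hb))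

variable {α β : Type*} [DecidableEq α] [DecidableEq β]

lemma sum_map_ite (l : List β) (b0 : β) (c : ℕ) :
    (l.map fun b => if b = b0 then c else 0).sum = c * l.count b0 := by
  induction l with
  | nil => simp
  | cons b l ih =>
    simp only [map_cons, sum_cons, count_cons, ih, beq_iff_eq, Nat.mul_add]
    split <;> simp <;> omega

lemma sum_map_ite_le_of_nodup (l : List β) (hl : l.Nodup) (b0 : β) (c : ℕ) :
    (l.map fun b => if b = b0 then c else 0).sum ≤ c := by
  rw [sum_map_ite]
  have := List.nodup_iff_count_le_one.1 hl b0
  calc c * count b0 l ≤ c * 1 := Nat.mul_le_mul_left c this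
    _ = c := Nat.mul_one c

lemma sum_map_finRange_ite {m : ℕ} (c : ℕ) (i0 : Fin m) :
    ((List.finRange m).map fun i => if i = i0 then c else 0).sum = c := by
  rw [sum_map_ite, List.count_eq_one_of_mem (List.nodup_finRange _) (List.mem_finRange _),
    Nat.mul_one]

lemma sum_map_le_add {m : ℕ} (g g1 g2 : Fin m → ℕ) (h : ∀ i, g i ≤ g1 i + g2 i) :
    ((List.finRange m).map g).sum ≤ ((List.finRange m).map g1).sum + ((List.finRange m).map g2).sum := by
  rw [← List.sum_map_add]
  exact List.sum_le_sum fun i _ => h i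

end generic

variable {n : ℕ} (G : SimpleGraph (Fin n)) [DecidableRel G.Adj]

lemma mem_edgePairs {e : Fin n × Fin n} : e ∈ edgePairs G ↔ e.1 < e.2 ∧ G.Adj e.1 e.2 := by
  simp only [edgePairs, List.mem_flatMap, List.mem_map, List.mem_filter, List.mem_finRange,
    decide_eq_true_eq, true_and]
  constructor
  · rintro ⟨i, j, ⟨h1, h2⟩, rfl⟩; exact ⟨h1, h2⟩
  · rintro ⟨h1, h2⟩; exact ⟨e.1, e.2, ⟨h1, h2⟩, rfl⟩

lemma nodup_edgePairs : (edgePairs G).Nodup := by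
  rw [edgePairs, List.nodup_flatMap]
  refine ⟨fun i _ => ((List.nodup_finRange n).filter _).map ?_ , ?_⟩
  · intro a b hab; simpa using hab
  · exact (List.nodup_finRange n).imp (fun {i j} hij a ha hb => by
      simp only [List.mem_map, List.mem_filter] at ha hb
      obtain ⟨_, _, rfl⟩ := ha
      obtain ⟨_, _, h⟩ := hb
      exact hij (congrArg Prod.fst h).symm)

lemma mem_incEdges {i : Fin n} {e : Fin n × Fin n} :
    e ∈ incEdges G i ↔ e ∈ edgePairs G ∧ (e.1 = i ∨ e.2 = i) := by
  simp [incEdges, List.mem_filter]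

lemma nodup_incEdges (i : Fin n) : (incEdges G i).Nodup :=
  (nodup_edgePairs G).filter _

lemma fst_ne_snd_of_mem_edgePairs {e : Fin n × Fin n} (he : e ∈ edgePairs G) : e.1 ≠ e.2 :=
  Fin.ne_of_lt ((mem_edgePairs G).1 he).1

end MLAProof

namespace MLAProof
open MLA List
variable {n : ℕ} (G : SimpleGraph (Fin n)) [DecidableRel G.Adj]

lemma lawful_ofDec {α : Type*} [DecidableEq α] : @LawfulBEq α instBEqOfDecidableEq :=
  { eq_of_beq := fun h => of_decide_eq_true h, rfl := fun {_} => decide_eq_true rfl }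

lemma beq_inst_eq {α : Type*} (i1 i2 : BEq α) (h1 : @LawfulBEq α i1) (h2 : @LawfulBEq α i2) :
    i1 = i2 := by
  have h : ∀ a b : α, (@BEq.beq _ i1 a b) = (@BEq.beq _ i2 a b) := by
    intro a b
    rw [Bool.eq_iff_iff]
    simp [@beq_iff_eq _ i1 h1, @beq_iff_eq _ i2 h2]
  cases i1; cases i2
  congr
  funext a b
  exact h a b

lemma edgeIdx_def (i : Fin n) (e : Fin n × Fin n) :
    edgeIdx G i e = @List.idxOf _ instBEqOfDecidableEq e (incEdges G i) := by
  have h : (instBEqProd : BEq (Fin n × Fin n)) = instBEqOfDecidableEq :=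
    beq_inst_eq _ _ inferInstance lawful_ofDec
  unfold edgeIdx
  rw [h]

lemma three_le_length_incEdges (hcubic : ∀ v : Fin n, G.degree v = 3) (i : Fin n) :
    3 ≤ (incEdges G i).length := by
  classical
  have h1 : (G.neighborFinset i).card = 3 := hcubic i
  set f : Fin n → Fin n × Fin n := fun j => if i < j then (i, j) else (j, i) with hf
  have hmaps : ∀ j ∈ G.neighborFinset i, f j ∈ (incEdges G i).toFinset := by
    intro j hj
    rw [SimpleGraph.mem_neighborFinset] at hj
    rw [List.mem_toFinset, mem_incEdges, hf]
    by_cases hij : i < j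
    · refine ⟨?_, ?_⟩ <;> simp only [if_pos hij]
      · exact (mem_edgePairs G).2 ⟨hij, hj⟩
      · exact Or.inl trivial
    · have hlt : j < i := lt_of_le_of_ne (not_lt.1 hij) hj.ne'
      refine ⟨?_, ?_⟩ <;> simp only [if_neg hij]
      · exact (mem_edgePairs G).2 ⟨hlt, hj.symm⟩
      · exact Or.inr trivial
  have hinj : Set.InjOn f (G.neighborFinset i) := by
    intro j hj j' hj' h
    simp only [Finset.mem_coe, SimpleGraph.mem_neighborFinset] at hj hj'
    simp only [hf] at h
    split_ifs at h with h1 h2 h2 <;> rw [Prod.ext_iff] at h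
    · exact h.2
    · exact absurd h.1.symm hj'.ne'
    · exact absurd h.1 hj.ne'
    · exact h.1
  calc 3 = (G.neighborFinset i).card := h1.symm
    _ ≤ (incEdges G i).toFinset.card := Finset.card_le_card_of_injOn f hmaps hinj
    _ ≤ (incEdges G i).length := List.toFinset_card_le _

variable {G}

lemma nthInc_eq {i : Fin n} {t : ℕ} (ht : t < (incEdges G i).length) :
    nthInc G i t = (incEdges G i)[t] := List.getD_eq_getElem _ _ ht

lemma nthInc_mem {i : Fin n} {t : ℕ} (ht : t < (incEdges G i).length) :
    nthInc G i t ∈ incEdges G i := by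
  rw [nthInc_eq ht]; exact List.getElem_mem ht

lemma edgeIdx_nthInc {i : Fin n} {t : ℕ} (ht : t < (incEdges G i).length) :
    edgeIdx G i (nthInc G i t) = t := by
  rw [nthInc_eq ht, edgeIdx_def]
  have hm : (incEdges G i)[t] ∈ incEdges G i := List.getElem_mem ht
  have h2 := @List.getElem_idxOf _ instBEqOfDecidableEq lawful_ofDec _ (incEdges G i) ((@List.idxOf_lt_length_iff _ instBEqOfDecidableEq lawful_ofDec _ _).2 hm)
  exact ((nodup_incEdges G i).getElem_inj_iff.1 h2)

lemma nthInc_ne {i : Fin n} {t t' : ℕ} (ht : t < (incEdges G i).length)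
    (ht' : t' < (incEdges G i).length) (h : t ≠ t') : nthInc G i t ≠ nthInc G i t' := by
  rw [nthInc_eq ht, nthInc_eq ht']
  exact fun he => h ((nodup_incEdges G i).getElem_inj_iff.1 he)

lemma eq_nthInc_of_edgeIdx {i : Fin n} {e : Fin n × Fin n} (he : e ∈ incEdges G i) :
    e = nthInc G i (edgeIdx G i e) := by
  rw [edgeIdx_def]
  have hlt : @List.idxOf _ instBEqOfDecidableEq e (incEdges G i) < (incEdges G i).length :=
    (@List.idxOf_lt_length_iff _ instBEqOfDecidableEq lawful_ofDec _ _).2 he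
  rw [nthInc_eq hlt]
  exact (@List.getElem_idxOf _ instBEqOfDecidableEq lawful_ofDec _ _ hlt).symm

lemma edgeIdx_lt {i : Fin n} {e : Fin n × Fin n} (he : e ∈ incEdges G i) :
    edgeIdx G i e < (incEdges G i).length := by
  rw [edgeIdx_def]; exact (@List.idxOf_lt_length_iff _ instBEqOfDecidableEq lawful_ofDec _ _).2 he

end MLAProof

namespace MLAProof
open MLA List
variable {n : ℕ} (G : SimpleGraph (Fin n)) [DecidableRel G.Adj]

/-- The multiset of symbols of the `i`-encoding of `e`, as a canonical list. -/
def msetE (k : Fin n) (e : Fin n × Fin n) : List (Sym n) :=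
  [.x k (edgeIdx G k e), .e e.1 e.2 0, .e e.1 e.2 1]

lemma count_enc (k : Fin n) (e : Fin n × Fin n) (b : Sym n) :
    (enc G k e).count b = (msetE G k e).count b := by
  rw [enc, count_append, encL, encR, msetE]
  split_ifs <;> simp [List.count_cons] <;> omega

lemma count_encLR (k : Fin n) (e : Fin n × Fin n) (b : Sym n) :
    (encL G k e).count b + (encR G k e).count b = (msetE G k e).count b := by
  rw [encL, encR, msetE]
  split_ifs <;> simp [List.count_cons] <;> omega

lemma count_vertexBlockX (k : Fin n) (b : Sym n) :
    (vertexBlockX G k).count b =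
      ([Sym.s k, .z k 0, .z k 1, .z k 2, .z k 3, .z k 4, .z k 5, .z k 6, .z k 7] :
        List (Sym n)).count b
      + (msetE G k (nthInc G k 0)).count b + (msetE G k (nthInc G k 1)).count b
      + (msetE G k (nthInc G k 2)).count b := by
  simp only [vertexBlockX, List.count_append, count_enc, List.count_cons, List.count_nil,
    beq_iff_eq]
  omega

lemma count_ABlock (k : Fin n) (b : Sym n) :
    (A1Block k ++ A2Block G k).count b =
      ([Sym.w k 0, .w k 1, .w k 2, .w k 3, .u k 0, .u k 1, .u k 2, .u k 3, .u k 4, .u k 5,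
        .z k 0, .z k 1, .z k 1, .z k 2, .z k 2, .z k 3, .z k 3, .z k 4, .z k 4, .z k 5,
        .z k 5, .z k 6, .z k 6, .z k 7] : List (Sym n)).count b
      + (msetE G k (nthInc G k 0)).count b + (msetE G k (nthInc G k 1)).count b
      + (msetE G k (nthInc G k 2)).count b := by
  have h0 := count_encLR G k (nthInc G k 0) b
  have h1 := count_encLR G k (nthInc G k 1) b
  have h2 := count_encLR G k (nthInc G k 2) b
  simp only [A1Block, A2Block, List.count_append, List.count_cons, List.count_nil,
    beq_iff_eq] at *
  omega

end MLAProof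

namespace MLAProof
open MLA List
variable {n : ℕ} {G : SimpleGraph (Fin n)} [DecidableRel G.Adj]

lemma msetE_count_s (k i : Fin n) (e : Fin n × Fin n) :
    (msetE G k e).count (Sym.s i) = 0 := by simp [msetE, List.count_cons]

lemma msetE_count_se (k i j : Fin n) (e : Fin n × Fin n) :
    (msetE G k e).count (Sym.se i j) = 0 := by simp [msetE, List.count_cons]

lemma msetE_count_z (k i : Fin n) (t : Fin 8) (e : Fin n × Fin n) :
    (msetE G k e).count (Sym.z i t) = 0 := by simp [msetE, List.count_cons]

lemma msetE_count_w (k i : Fin n) (t : Fin 4) (e : Fin n × Fin n) :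
    (msetE G k e).count (Sym.w i t) = 0 := by simp [msetE, List.count_cons]

lemma msetE_count_u (k i : Fin n) (t : Fin 6) (e : Fin n × Fin n) :
    (msetE G k e).count (Sym.u i t) = 0 := by simp [msetE, List.count_cons]

lemma msetE_count_x (k i : Fin n) (p : ℕ) (e : Fin n × Fin n) :
    (msetE G k e).count (Sym.x i p) = if k = i ∧ edgeIdx G k e = p then 1 else 0 := by
  simp [msetE, List.count_cons]

lemma msetE_count_e (k i j : Fin n) (t : Fin 2) (e : Fin n × Fin n) :
    (msetE G k e).count (Sym.e i j t) ≤ if e = (i, j) then 1 else 0 := by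
  simp only [msetE, List.count_cons, List.count_nil, beq_iff_eq]
  by_cases he : e = (i, j)
  · subst he
    simp only [Sym.e.injEq, true_and, if_pos rfl]
    fin_cases t <;> simp
  · have h1 : ¬(Sym.e e.1 e.2 0 = Sym.e i j t) := by
      intro h
      rw [Sym.e.injEq] at h
      exact he (Prod.ext h.1 h.2.1)
    have h2 : ¬(Sym.e e.1 e.2 1 = Sym.e i j t) := by
      intro h
      rw [Sym.e.injEq] at h
      exact he (Prod.ext h.1 h.2.1)
    simp [h1, h2, he]

lemma ind_nthInc_le {k : Fin n} (hlen : 3 ≤ (incEdges G k).length) (i j : Fin n) :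
    (if nthInc G k 0 = (i, j) then 1 else 0) + (if nthInc G k 1 = (i, j) then 1 else 0)
      + (if nthInc G k 2 = (i, j) then 1 else 0)
      ≤ (if k = i then 1 else 0) + (if k = j then 1 else 0) := by
  have hkey : ∀ t : ℕ, t < 3 → nthInc G k t = (i, j) → (k = i ∨ k = j) := by
    intro t ht he
    have hm := (mem_incEdges G).1 (nthInc_mem (G := G) (i := k) (t := t) (by omega))
    rcases hm.2 with h | h
    · left; rw [he] at h; exact h.symm
    · right; rw [he] at h; exact h.symm
  have h01 : nthInc G k 0 ≠ nthInc G k 1 := nthInc_ne (by omega) (by omega) (by omega)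
  have h02 : nthInc G k 0 ≠ nthInc G k 2 := nthInc_ne (by omega) (by omega) (by omega)
  have h12 : nthInc G k 1 ≠ nthInc G k 2 := nthInc_ne (by omega) (by omega) (by omega)
  by_cases hij : k = i ∨ k = j
  · have b0 : (if nthInc G k 0 = (i, j) then 1 else 0) + (if nthInc G k 1 = (i, j) then 1 else 0)
        + (if nthInc G k 2 = (i, j) then 1 else 0) ≤ 1 := by
      split_ifs <;>
        first
          | omega
          | exact absurd (‹nthInc G k 0 = (i, j)›.trans ‹nthInc G k 1 = (i, j)›.symm) h01
          | exact absurd (‹nthInc G k 0 = (i, j)›.trans ‹nthInc G k 2 = (i, j)›.symm) h02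
          | exact absurd (‹nthInc G k 1 = (i, j)›.trans ‹nthInc G k 2 = (i, j)›.symm) h12
    have hr : 1 ≤ (if k = i then 1 else 0) + (if k = j then 1 else 0) := by
      rcases hij with h | h <;> simp [h]
    omega
  · have z0 : ¬(nthInc G k 0 = (i, j)) := fun he => hij (hkey 0 (by omega) he)
    have z1 : ¬(nthInc G k 1 = (i, j)) := fun he => hij (hkey 1 (by omega) he)
    have z2 : ¬(nthInc G k 2 = (i, j)) := fun he => hij (hkey 2 (by omega) he)
    simp [z0, z1, z2]

end MLAProof

namespace MLAProof
open MLA List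
variable {n : ℕ} {G : SimpleGraph (Fin n)} [DecidableRel G.Adj]

/-! ### Vertex block bounds -/

lemma countV_s (k i : Fin n) :
    (vertexBlockX G k).count (Sym.s i) ≤ if k = i then 1 else 0 := by
  rw [count_vertexBlockX]
  simp [msetE_count_s, List.count_cons]

lemma countV_se (k i j : Fin n) : (vertexBlockX G k).count (Sym.se i j) = 0 := by
  rw [count_vertexBlockX]
  simp [msetE_count_se, List.count_cons]

lemma countV_z (k i : Fin n) (t : Fin 8) :
    (vertexBlockX G k).count (Sym.z i t) ≤ if k = i then 1 else 0 := by
  rw [count_vertexBlockX]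
  simp only [msetE_count_z, List.count_cons, List.count_nil, beq_iff_eq]
  by_cases hk : k = i
  · subst hk
    simp only [Sym.z.injEq, true_and, if_pos rfl]
    fin_cases t <;> simp
  · simp [hk, fun t' : Fin 8 => show ¬(Sym.z k t' = Sym.z i t) from
      fun h => hk (Sym.z.injEq _ _ _ _ ▸ h).1]

lemma countV_w (k i : Fin n) (t : Fin 4) : (vertexBlockX G k).count (Sym.w i t) = 0 := by
  rw [count_vertexBlockX]
  simp [msetE_count_w, List.count_cons]

lemma countV_u (k i : Fin n) (t : Fin 6) : (vertexBlockX G k).count (Sym.u i t) = 0 := by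
  rw [count_vertexBlockX]
  simp [msetE_count_u, List.count_cons]

lemma countV_x (k : Fin n) (hlen : 3 ≤ (incEdges G k).length) (i : Fin n) (p : ℕ) :
    (vertexBlockX G k).count (Sym.x i p) ≤ if k = i then 1 else 0 := by
  rw [count_vertexBlockX]
  have e0 : edgeIdx G k (nthInc G k 0) = 0 := edgeIdx_nthInc (by omega)
  have e1 : edgeIdx G k (nthInc G k 1) = 1 := edgeIdx_nthInc (by omega)
  have e2 : edgeIdx G k (nthInc G k 2) = 2 := edgeIdx_nthInc (by omega)
  simp only [msetE_count_x, e0, e1, e2, List.count_cons, List.count_nil, beq_iff_eq]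
  by_cases hk : k = i
  · subst hk
    simp only [true_and, if_pos rfl]
    simp only [List.count_nil, Nat.zero_add]
    rcases p with _ | _ | _ | p <;> simp
  · simp [hk]

lemma countV_e (k : Fin n) (hlen : 3 ≤ (incEdges G k).length) (i j : Fin n) (t : Fin 2) :
    (vertexBlockX G k).count (Sym.e i j t)
      ≤ (if k = i then 1 else 0) + (if k = j then 1 else 0) := by
  rw [count_vertexBlockX]
  have l0 : ([Sym.s k, .z k 0, .z k 1, .z k 2, .z k 3, .z k 4, .z k 5, .z k 6, .z k 7] :
      List (Sym n)).count (Sym.e i j t) = 0 := by simp [List.count_cons]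
  have m0 := msetE_count_e (G := G) k i j t (nthInc G k 0)
  have m1 := msetE_count_e (G := G) k i j t (nthInc G k 1)
  have m2 := msetE_count_e (G := G) k i j t (nthInc G k 2)
  have ind := ind_nthInc_le hlen i j
  omega

/-! ### Edge block bounds -/

lemma countE_s (e : Fin n × Fin n) (i : Fin n) :
    (edgeBlockX G e).count (Sym.s i) = 0 := by simp [edgeBlockX, List.count_cons]

lemma countE_z (e : Fin n × Fin n) (i : Fin n) (t : Fin 8) :
    (edgeBlockX G e).count (Sym.z i t) = 0 := by simp [edgeBlockX, List.count_cons]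

lemma countE_w (e : Fin n × Fin n) (i : Fin n) (t : Fin 4) :
    (edgeBlockX G e).count (Sym.w i t) = 0 := by simp [edgeBlockX, List.count_cons]

lemma countE_u (e : Fin n × Fin n) (i : Fin n) (t : Fin 6) :
    (edgeBlockX G e).count (Sym.u i t) = 0 := by simp [edgeBlockX, List.count_cons]

lemma countE_se (e : Fin n × Fin n) (i j : Fin n) :
    (edgeBlockX G e).count (Sym.se i j) ≤ if e = (i, j) then 1 else 0 := by
  by_cases he : e = (i, j)
  · subst he; simp [edgeBlockX, List.count_cons]
  · have h1 : ¬(Sym.se e.1 e.2 = Sym.se i j) := by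
      intro h
      rw [Sym.se.injEq] at h
      exact he (Prod.ext h.1 h.2)
    simp [edgeBlockX, List.count_cons, h1, he]

lemma countE_e (e : Fin n × Fin n) (i j : Fin n) (t : Fin 2) :
    (edgeBlockX G e).count (Sym.e i j t) ≤ if e = (i, j) then 1 else 0 := by
  by_cases he : e = (i, j)
  · subst he
    simp only [edgeBlockX, List.count_cons, List.count_nil, beq_iff_eq, Sym.e.injEq,
      true_and, if_pos rfl]
    fin_cases t <;> simp
  · have h1 : ∀ t' : Fin 2, ¬(Sym.e e.1 e.2 t' = Sym.e i j t) := by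
      intro t' h
      rw [Sym.e.injEq] at h
      exact he (Prod.ext h.1 h.2.1)
    simp [edgeBlockX, List.count_cons, h1, he]

lemma countE_x (e : Fin n × Fin n) (he : e ∈ edgePairs G) (i : Fin n) (p : ℕ) :
    (edgeBlockX G e).count (Sym.x i p) ≤ if e = nthInc G i p then 1 else 0 := by
  have hc : (edgeBlockX G e).count (Sym.x i p)
      = (if e.1 = i ∧ edgeIdx G e.1 e = p then 1 else 0)
        + (if e.2 = i ∧ edgeIdx G e.2 e = p then 1 else 0) := by
    simp [edgeBlockX, List.count_cons]
    omega
  rw [hc]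
  have hne := fst_ne_snd_of_mem_edgePairs (G := G) he
  by_cases h1 : e.1 = i ∧ edgeIdx G e.1 e = p
  · have hinc : e ∈ incEdges G i := (mem_incEdges G).2 ⟨he, Or.inl h1.1⟩
    obtain ⟨h11, h12⟩ := h1
    rw [h11] at h12
    have heq : e = nthInc G i p := by
      have h3 := eq_nthInc_of_edgeIdx hinc
      rw [h12] at h3
      exact h3
    have h2 : ¬(e.2 = i ∧ edgeIdx G e.2 e = p) := by
      rintro ⟨h2, -⟩
      exact hne (h11.trans h2.symm)
    rw [if_pos ⟨h11, h11 ▸ h12⟩, if_neg h2, if_pos heq]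
  · by_cases h2 : e.2 = i ∧ edgeIdx G e.2 e = p
    · have hinc : e ∈ incEdges G i := (mem_incEdges G).2 ⟨he, Or.inr h2.1⟩
      obtain ⟨h21, h22⟩ := h2
      rw [h21] at h22
      have heq : e = nthInc G i p := by
        have h3 := eq_nthInc_of_edgeIdx hinc
        rw [h22] at h3
        exact h3
      rw [if_neg h1, if_pos ⟨h21, h21 ▸ h22⟩, if_pos heq]
    · rw [if_neg h1, if_neg h2]
      split <;> omega

/-! ### A block bounds -/

lemma countA_s (k i : Fin n) : (A1Block k ++ A2Block G k).count (Sym.s i) = 0 := by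
  rw [count_ABlock]
  simp [msetE_count_s, List.count_cons]

lemma countA_se (k i j : Fin n) : (A1Block k ++ A2Block G k).count (Sym.se i j) = 0 := by
  rw [count_ABlock]
  simp [msetE_count_se, List.count_cons]

lemma countA_z (k i : Fin n) (t : Fin 8) :
    (A1Block k ++ A2Block G k).count (Sym.z i t) ≤ if k = i then 2 else 0 := by
  rw [count_ABlock]
  simp only [msetE_count_z, List.count_cons, List.count_nil, beq_iff_eq]
  by_cases hk : k = i
  · subst hk
    simp only [Sym.z.injEq, true_and, if_pos rfl]
    fin_cases t <;> simp
  · simp [hk, fun t' : Fin 8 => show ¬(Sym.z k t' = Sym.z i t) from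
      fun h => hk (Sym.z.injEq _ _ _ _ ▸ h).1]

lemma countA_w (k i : Fin n) (t : Fin 4) :
    (A1Block k ++ A2Block G k).count (Sym.w i t) ≤ if k = i then 1 else 0 := by
  rw [count_ABlock]
  simp only [msetE_count_w, List.count_cons, List.count_nil, beq_iff_eq]
  by_cases hk : k = i
  · subst hk
    simp only [Sym.w.injEq, true_and, if_pos rfl]
    fin_cases t <;> simp
  · simp [hk, fun t' : Fin 4 => show ¬(Sym.w k t' = Sym.w i t) from
      fun h => hk (Sym.w.injEq _ _ _ _ ▸ h).1]

lemma countA_u (k i : Fin n) (t : Fin 6) :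
    (A1Block k ++ A2Block G k).count (Sym.u i t) ≤ if k = i then 1 else 0 := by
  rw [count_ABlock]
  simp only [msetE_count_u, List.count_cons, List.count_nil, beq_iff_eq]
  by_cases hk : k = i
  · subst hk
    simp only [Sym.u.injEq, true_and, if_pos rfl]
    fin_cases t <;> simp
  · simp [hk, fun t' : Fin 6 => show ¬(Sym.u k t' = Sym.u i t) from
      fun h => hk (Sym.u.injEq _ _ _ _ ▸ h).1]

lemma countA_x (k : Fin n) (hlen : 3 ≤ (incEdges G k).length) (i : Fin n) (p : ℕ) :
    (A1Block k ++ A2Block G k).count (Sym.x i p) ≤ if k = i then 1 else 0 := by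
  rw [count_ABlock]
  have e0 : edgeIdx G k (nthInc G k 0) = 0 := edgeIdx_nthInc (by omega)
  have e1 : edgeIdx G k (nthInc G k 1) = 1 := edgeIdx_nthInc (by omega)
  have e2 : edgeIdx G k (nthInc G k 2) = 2 := edgeIdx_nthInc (by omega)
  simp only [msetE_count_x, e0, e1, e2, List.count_cons, List.count_nil, beq_iff_eq]
  by_cases hk : k = i
  · subst hk
    simp only [true_and, if_pos rfl]
    simp only [List.count_nil, Nat.zero_add]
    rcases p with _ | _ | _ | p <;> simp
  · simp [hk]

lemma countA_e (k : Fin n) (hlen : 3 ≤ (incEdges G k).length) (i j : Fin n) (t : Fin 2) :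
    (A1Block k ++ A2Block G k).count (Sym.e i j t)
      ≤ (if k = i then 1 else 0) + (if k = j then 1 else 0) := by
  rw [count_ABlock]
  have l0 : ([Sym.w k 0, .w k 1, .w k 2, .w k 3, .u k 0, .u k 1, .u k 2, .u k 3, .u k 4,
      .u k 5, .z k 0, .z k 1, .z k 1, .z k 2, .z k 2, .z k 3, .z k 3, .z k 4, .z k 4,
      .z k 5, .z k 5, .z k 6, .z k 6, .z k 7] : List (Sym n)).count (Sym.e i j t) = 0 := by
    simp [List.count_cons]
  have m0 := msetE_count_e (G := G) k i j t (nthInc G k 0)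
  have m1 := msetE_count_e (G := G) k i j t (nthInc G k 1)
  have m2 := msetE_count_e (G := G) k i j t (nthInc G k 2)
  have ind := ind_nthInc_le hlen i j
  omega

end MLAProof

namespace MLAProof
open MLA List

lemma count_flatMap_eq_zero {α β : Type*} [BEq α] (a : α) (l : List β)
    (f : β → List α) (h : ∀ b ∈ l, (f b).count a = 0) : (l.flatMap f).count a = 0 :=
  Nat.le_zero.1 (le_trans (count_flatMap_le a (fun _ => 0) l f (fun b hb => (h b hb).le))
    (by simp))

lemma sum_finRange_two {m : ℕ} (i j : Fin m) :
    ((List.finRange m).map fun k => (if k = i then 1 else 0) + (if k = j then 1 else 0)).sum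
      = 2 := by
  rw [List.sum_map_add, sum_map_finRange_ite, sum_map_finRange_ite]

variable {n : ℕ} {G : SimpleGraph (Fin n)} [DecidableRel G.Adj]

lemma countY1 (k : Fin n) (a : Sym n) :
    (some (Sym.s k) :: List.replicate 17 (none : Option (Sym n))).count (some a)
      = if Sym.s k = a then 1 else 0 := by
  simp [List.count_cons, List.count_replicate]

lemma countY2 (e : Fin n × Fin n) (a : Sym n) :
    (some (Sym.se e.1 e.2) :: List.replicate 4 (none : Option (Sym n))).count (some a)
      = if Sym.se e.1 e.2 = a then 1 else 0 := by
  simp [List.count_cons, List.count_replicate]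

lemma countY3 (k : Fin n) (a : Sym n) :
    ((A1Block k ++ A2Block G k).map some).count (some a)
      = (A1Block k ++ A2Block G k).count a := by
  haveI hbase : LawfulBEq (Sym n) := lawful_ofDec
  have hOpt : (Option.instBEq : BEq (Option (Sym n))) = instBEqOfDecidableEq :=
    beq_inst_eq _ _ inferInstance lawful_ofDec
  rw [hOpt]
  exact @List.count_map_of_injective _ _ _ _ instBEqOfDecidableEq lawful_ofDec _ _ (fun _ _ h => Option.some.inj h) a

end MLAProof

open MLA MLAProof List in
theorem aux_at_most_five_occurrences {n : ℕ} (G : SimpleGraph (Fin n))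
    [DecidableRel G.Adj] (hcubic : ∀ v : Fin n, G.degree v = 3) (a : Sym n) :
    (genomeX G).count a ≤ 5 ∧ (alignedY G).count (some a) ≤ 5 := by
  have hlen : ∀ k : Fin n, 3 ≤ (incEdges G k).length := three_le_length_incEdges G hcubic
  cases a with
  | s i =>
    constructor
    · rw [genomeX, List.count_append, List.count_append]
      have hV : ((List.finRange n).flatMap fun k => vertexBlockX G k).count (Sym.s i) ≤ 1 :=
        le_trans (count_flatMap_le _ (fun k => if k = i then 1 else 0) _ _
          (fun k _ => countV_s (G := G) k i)) (le_of_eq (sum_map_finRange_ite 1 i))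
      have hE := count_flatMap_eq_zero (Sym.s i) (edgePairs G) _ (fun e _ => countE_s (G := G) e i)
      have hA := count_flatMap_eq_zero (Sym.s i) (List.finRange n) _ (fun k _ => countA_s (G := G) k i)
      simp only [hE, hA]
      omega
    · rw [alignedY, List.count_append, List.count_append]
      have h1 : ((List.finRange n).flatMap fun k =>
          some (Sym.s k) :: List.replicate 17 (none : Option (Sym n))).count (some (Sym.s i))
          ≤ 1 := by
        refine le_trans (count_flatMap_le _ (fun k => if k = i then 1 else 0) _ _
          (fun k _ => ?_)) (le_of_eq (sum_map_finRange_ite 1 i))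
        rw [countY1]
        by_cases h : k = i <;> simp [h]
      have h2 := count_flatMap_eq_zero (some (Sym.s i)) (edgePairs G)
        (fun e => some (Sym.se e.1 e.2) :: List.replicate 4 (none : Option (Sym n)))
        (fun e _ => by rw [countY2]; simp)
      have h3 := count_flatMap_eq_zero (some (Sym.s i)) (List.finRange n)
        (fun k => (A1Block k ++ A2Block G k).map some)
        (fun k _ => by rw [countY3 (G := G)]; exact countA_s (G := G) k i)
      omega
  | se i j =>
    constructor
    · rw [genomeX, List.count_append, List.count_append]
      have hV := count_flatMap_eq_zero (Sym.se i j) (List.finRange n) _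
        (fun k _ => countV_se (G := G) k i j)
      have hE : ((edgePairs G).flatMap fun e => edgeBlockX G e).count (Sym.se i j) ≤ 1 :=
        le_trans (count_flatMap_le _ (fun e => if e = (i, j) then 1 else 0) _ _
          (fun e _ => countE_se (G := G) e i j))
          (sum_map_ite_le_of_nodup _ (nodup_edgePairs G) _ 1)
      have hA := count_flatMap_eq_zero (Sym.se i j) (List.finRange n) _
        (fun k _ => countA_se (G := G) k i j)
      simp only [hV, hA]
      omega
    · rw [alignedY, List.count_append, List.count_append]
      have h1 := count_flatMap_eq_zero (some (Sym.se i j)) (List.finRange n)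
        (fun k => some (Sym.s k) :: List.replicate 17 (none : Option (Sym n)))
        (fun k _ => by rw [countY1]; simp)
      have h2 : ((edgePairs G).flatMap fun e =>
          some (Sym.se e.1 e.2) :: List.replicate 4 (none : Option (Sym n))).count
            (some (Sym.se i j)) ≤ 1 := by
        refine le_trans (count_flatMap_le _ (fun e => if e = (i, j) then 1 else 0) _ _
          (fun e _ => ?_)) (sum_map_ite_le_of_nodup _ (nodup_edgePairs G) _ 1)
        rw [countY2]
        by_cases h : e = (i, j)
        · subst h; simp
        · have : ¬(Sym.se e.1 e.2 = Sym.se i j) := by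
            intro hh
            rw [Sym.se.injEq] at hh
            exact h (Prod.ext hh.1 hh.2)
          simp [h, this]
      have h3 := count_flatMap_eq_zero (some (Sym.se i j)) (List.finRange n)
        (fun k => (A1Block k ++ A2Block G k).map some)
        (fun k _ => by rw [countY3 (G := G)]; exact countA_se (G := G) k i j)
      omega
  | x i p =>
    constructor
    · rw [genomeX, List.count_append, List.count_append]
      have hV : ((List.finRange n).flatMap fun k => vertexBlockX G k).count (Sym.x i p) ≤ 1 :=
        le_trans (count_flatMap_le _ (fun k => if k = i then 1 else 0) _ _
          (fun k _ => countV_x (G := G) k (hlen k) i p)) (le_of_eq (sum_map_finRange_ite 1 i))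
      have hE : ((edgePairs G).flatMap fun e => edgeBlockX G e).count (Sym.x i p) ≤ 1 :=
        le_trans (count_flatMap_le _ (fun e => if e = nthInc G i p then 1 else 0) _ _
          (fun e he => countE_x (G := G) e he i p))
          (sum_map_ite_le_of_nodup _ (nodup_edgePairs G) _ 1)
      have hA : ((List.finRange n).flatMap fun k => A1Block k ++ A2Block G k).count
          (Sym.x i p) ≤ 1 :=
        le_trans (count_flatMap_le _ (fun k => if k = i then 1 else 0) _ _
          (fun k _ => countA_x (G := G) k (hlen k) i p)) (le_of_eq (sum_map_finRange_ite 1 i))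
      omega
    · rw [alignedY, List.count_append, List.count_append]
      have h1 := count_flatMap_eq_zero (some (Sym.x i p)) (List.finRange n)
        (fun k => some (Sym.s k) :: List.replicate 17 (none : Option (Sym n)))
        (fun k _ => by rw [countY1]; simp)
      have h2 := count_flatMap_eq_zero (some (Sym.x i p)) (edgePairs G)
        (fun e => some (Sym.se e.1 e.2) :: List.replicate 4 (none : Option (Sym n)))
        (fun e _ => by rw [countY2]; simp)
      have h3 : ((List.finRange n).flatMap fun k =>
          (A1Block k ++ A2Block G k).map some).count (some (Sym.x i p)) ≤ 1 := by
        refine le_trans (count_flatMap_le _ (fun k => if k = i then 1 else 0) _ _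
          (fun k _ => ?_)) (le_of_eq (sum_map_finRange_ite 1 i))
        rw [countY3 (G := G)]
        exact countA_x (G := G) k (hlen k) i p
      omega
  | e i j t =>
    constructor
    · rw [genomeX, List.count_append, List.count_append]
      have hV : ((List.finRange n).flatMap fun k => vertexBlockX G k).count (Sym.e i j t)
          ≤ 2 :=
        le_trans (count_flatMap_le _
          (fun k => (if k = i then 1 else 0) + (if k = j then 1 else 0)) _ _
          (fun k _ => countV_e (G := G) k (hlen k) i j t)) (le_of_eq (sum_finRange_two i j))
      have hE : ((edgePairs G).flatMap fun e => edgeBlockX G e).count (Sym.e i j t) ≤ 1 :=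
        le_trans (count_flatMap_le _ (fun e => if e = (i, j) then 1 else 0) _ _
          (fun e _ => countE_e (G := G) e i j t))
          (sum_map_ite_le_of_nodup _ (nodup_edgePairs G) _ 1)
      have hA : ((List.finRange n).flatMap fun k => A1Block k ++ A2Block G k).count
          (Sym.e i j t) ≤ 2 :=
        le_trans (count_flatMap_le _
          (fun k => (if k = i then 1 else 0) + (if k = j then 1 else 0)) _ _
          (fun k _ => countA_e (G := G) k (hlen k) i j t)) (le_of_eq (sum_finRange_two i j))
      omega
    · rw [alignedY, List.count_append, List.count_append]
      have h1 := count_flatMap_eq_zero (some (Sym.e i j t)) (List.finRange n)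
        (fun k => some (Sym.s k) :: List.replicate 17 (none : Option (Sym n)))
        (fun k _ => by rw [countY1]; simp)
      have h2 := count_flatMap_eq_zero (some (Sym.e i j t)) (edgePairs G)
        (fun e => some (Sym.se e.1 e.2) :: List.replicate 4 (none : Option (Sym n)))
        (fun e _ => by rw [countY2]; simp)
      have h3 : ((List.finRange n).flatMap fun k =>
          (A1Block k ++ A2Block G k).map some).count (some (Sym.e i j t)) ≤ 2 := by
        refine le_trans (count_flatMap_le _
          (fun k => (if k = i then 1 else 0) + (if k = j then 1 else 0)) _ _
          (fun k _ => ?_)) (le_of_eq (sum_finRange_two i j))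
        rw [countY3 (G := G)]
        exact countA_e (G := G) k (hlen k) i j t
      omega
  | z i t =>
    constructor
    · rw [genomeX, List.count_append, List.count_append]
      have hV : ((List.finRange n).flatMap fun k => vertexBlockX G k).count (Sym.z i t) ≤ 1 :=
        le_trans (count_flatMap_le _ (fun k => if k = i then 1 else 0) _ _
          (fun k _ => countV_z (G := G) k i t)) (le_of_eq (sum_map_finRange_ite 1 i))
      have hE := count_flatMap_eq_zero (Sym.z i t) (edgePairs G) _ (fun e _ => countE_z (G := G) e i t)
      have hA : ((List.finRange n).flatMap fun k => A1Block k ++ A2Block G k).count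
          (Sym.z i t) ≤ 2 :=
        le_trans (count_flatMap_le _ (fun k => if k = i then 2 else 0) _ _
          (fun k _ => countA_z (G := G) k i t)) (le_of_eq (sum_map_finRange_ite 2 i))
      simp only [hE]
      omega
    · rw [alignedY, List.count_append, List.count_append]
      have h1 := count_flatMap_eq_zero (some (Sym.z i t)) (List.finRange n)
        (fun k => some (Sym.s k) :: List.replicate 17 (none : Option (Sym n)))
        (fun k _ => by rw [countY1]; simp)
      have h2 := count_flatMap_eq_zero (some (Sym.z i t)) (edgePairs G)
        (fun e => some (Sym.se e.1 e.2) :: List.replicate 4 (none : Option (Sym n)))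
        (fun e _ => by rw [countY2]; simp)
      have h3 : ((List.finRange n).flatMap fun k =>
          (A1Block k ++ A2Block G k).map some).count (some (Sym.z i t)) ≤ 2 := by
        refine le_trans (count_flatMap_le _ (fun k => if k = i then 2 else 0) _ _
          (fun k _ => ?_)) (le_of_eq (sum_map_finRange_ite 2 i))
        rw [countY3 (G := G)]
        exact countA_z (G := G) k i t
      omega
  | w i t =>
    constructor
    · rw [genomeX, List.count_append, List.count_append]
      have hV := count_flatMap_eq_zero (Sym.w i t) (List.finRange n) _
        (fun k _ => countV_w (G := G) k i t)
      have hE := count_flatMap_eq_zero (Sym.w i t) (edgePairs G) _ (fun e _ => countE_w (G := G) e i t)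
      have hA : ((List.finRange n).flatMap fun k => A1Block k ++ A2Block G k).count
          (Sym.w i t) ≤ 1 :=
        le_trans (count_flatMap_le _ (fun k => if k = i then 1 else 0) _ _
          (fun k _ => countA_w (G := G) k i t)) (le_of_eq (sum_map_finRange_ite 1 i))
      simp only [hV, hE]
      omega
    · rw [alignedY, List.count_append, List.count_append]
      have h1 := count_flatMap_eq_zero (some (Sym.w i t)) (List.finRange n)
        (fun k => some (Sym.s k) :: List.replicate 17 (none : Option (Sym n)))
        (fun k _ => by rw [countY1]; simp)
      have h2 := count_flatMap_eq_zero (some (Sym.w i t)) (edgePairs G)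
        (fun e => some (Sym.se e.1 e.2) :: List.replicate 4 (none : Option (Sym n)))
        (fun e _ => by rw [countY2]; simp)
      have h3 : ((List.finRange n).flatMap fun k =>
          (A1Block k ++ A2Block G k).map some).count (some (Sym.w i t)) ≤ 1 := by
        refine le_trans (count_flatMap_le _ (fun k => if k = i then 1 else 0) _ _
          (fun k _ => ?_)) (le_of_eq (sum_map_finRange_ite 1 i))
        rw [countY3 (G := G)]
        exact countA_w (G := G) k i t
      omega
  | u i t =>
    constructor
    · rw [genomeX, List.count_append, List.count_append]
      have hV := count_flatMap_eq_zero (Sym.u i t) (List.finRange n) _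
        (fun k _ => countV_u (G := G) k i t)
      have hE := count_flatMap_eq_zero (Sym.u i t) (edgePairs G) _ (fun e _ => countE_u (G := G) e i t)
      have hA : ((List.finRange n).flatMap fun k => A1Block k ++ A2Block G k).count
          (Sym.u i t) ≤ 1 :=
        le_trans (count_flatMap_le _ (fun k => if k = i then 1 else 0) _ _
          (fun k _ => countA_u (G := G) k i t)) (le_of_eq (sum_map_finRange_ite 1 i))
      simp only [hV, hE]
      omega
    · rw [alignedY, List.count_append, List.count_append]
      have h1 := count_flatMap_eq_zero (some (Sym.u i t)) (List.finRange n)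
        (fun k => some (Sym.s k) :: List.replicate 17 (none : Option (Sym n)))
        (fun k _ => by rw [countY1]; simp)
      have h2 := count_flatMap_eq_zero (some (Sym.u i t)) (edgePairs G)
        (fun e => some (Sym.se e.1 e.2) :: List.replicate 4 (none : Option (Sym n)))
        (fun e _ => by rw [countY2]; simp)
      have h3 : ((List.finRange n).flatMap fun k =>
          (A1Block k ++ A2Block G k).map some).count (some (Sym.u i t)) ≤ 1 := by
        refine le_trans (count_flatMap_le _ (fun k => if k = i then 1 else 0) _ _
          (fun k _ => ?_)) (le_of_eq (sum_map_finRange_ite 1 i))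
        rw [countY3 (G := G)]
        exact countA_u (G := G) k i t
      omega


open MLA in
/-- In the MLA instance `(X, Y)` corresponding to a cubic graph
`G`, every symbol of the alphabet occurs at most 5 times in `X` and at most 5
times in `Y`. -/
theorem at_most_five_occurrences {n : ℕ} (G : SimpleGraph (Fin n))
    [DecidableRel G.Adj] (hcubic : ∀ v : Fin n, G.degree v = 3) (a : Sym n) :
    (genomeX G).count a ≤ 5 ∧ (alignedY G).count (some a) ≤ 5 :=
  aux_at_most_five_occurrences G hcubic a
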